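/- Let n ≥ 5, p = (n+2)/(n-2), and let φ_j : (0,∞) → ℝ be written as φ_j = U_r ψ_j where U_r = ∂U/∂r. Then the mode-1 quadratic form satisfies the identity Q₁(φ_j,φ_j) = ∫_0^{2R} |ψ_j'|² U_r² r^{n-1} dr ≥ 0, where Q₁(ψ,ψ) = ∫_0^{2R} ( |ψ'|² - pU^{p-1}ψ² + (n-1)ψ²/r² ) r^{n-1} dr. -/

import Mathlib

open MeasureTheory

set_option maxHeartbeats 4000000 in
theorem stmt16 (n : ℕ) (hn : 5 ≤ n) (R : ℝ) (hR : 0 < R)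
    (p : ℝ) (hp : p = ((n : ℝ) + 2) / ((n : ℝ) - 2))
    (u : ℝ → ℝ)
    (hu : ∀ r : ℝ, u r = ((n : ℝ) * ((n : ℝ) - 2)) ^ (((n : ℝ) - 2) / 4) *
      (1 + r ^ 2) ^ (-(((n : ℝ) - 2) / 2)))
    (Ur : ℝ → ℝ) (hUr : Ur = deriv u)
    (ψ : ℝ → ℝ) (hψ : ContDiff ℝ 2 ψ)
    (φ : ℝ → ℝ) (hφ : ∀ r, φ r = Ur r * ψ r)
    (hψR : ψ (2 * R) = 0)
    -- regularity at the origin: the boundary term vanishes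
    (hbdry : Filter.Tendsto (fun r => (Ur r) ^ 2 * ψ r * deriv ψ r * r ^ ((n : ℝ) - 1))
      (nhdsWithin 0 (Set.Ioi 0)) (nhds 0))
    -- all integrals converge
    (hint1 : IntegrableOn (fun r => (deriv φ r) ^ 2 * r ^ ((n : ℝ) - 1)) (Set.Ioo 0 (2 * R)))
    (hint2 : IntegrableOn (fun r => (u r) ^ (p - 1) * (φ r) ^ 2 * r ^ ((n : ℝ) - 1))
      (Set.Ioo 0 (2 * R)))
    (hint3 : IntegrableOn (fun r => (φ r) ^ 2 / r ^ 2 * r ^ ((n : ℝ) - 1)) (Set.Ioo 0 (2 * R)))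
    (hint4 : IntegrableOn (fun r => (deriv ψ r) ^ 2 * (Ur r) ^ 2 * r ^ ((n : ℝ) - 1))
      (Set.Ioo 0 (2 * R))) :
    (∫ r in Set.Ioo 0 (2 * R),
        ((deriv φ r) ^ 2 - p * (u r) ^ (p - 1) * (φ r) ^ 2 +
          ((n : ℝ) - 1) * (φ r) ^ 2 / r ^ 2) * r ^ ((n : ℝ) - 1)) =
      (∫ r in Set.Ioo 0 (2 * R), (deriv ψ r) ^ 2 * (Ur r) ^ 2 * r ^ ((n : ℝ) - 1)) ∧
    0 ≤ ∫ r in Set.Ioo 0 (2 * R), (deriv ψ r) ^ 2 * (Ur r) ^ 2 * r ^ ((n : ℝ) - 1) := by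
  have hA5 : (5:ℝ) ≤ (n:ℝ) := by exact_mod_cast hn
  set A : ℝ := (n:ℝ) with hAdef
  have hA2 : (0:ℝ) < A - 2 := by linarith
  have h2R : (0:ℝ) < 2 * R := by linarith
  have hXpos : ∀ r : ℝ, (0:ℝ) < 1 + r ^ 2 := fun r => by positivity
  set e : ℝ := -((A - 2) / 2) with hedef
  set c : ℝ := (A * (A - 2)) ^ ((A - 2) / 4) with hcdef
  set K : ℝ := 2 * c * e with hKdef
  -- basic derivative facts
  have hbase : ∀ r : ℝ, HasDerivAt (fun x : ℝ => 1 + x ^ 2) (2 * r) r := by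
    intro r
    simpa using ((hasDerivAt_pow 2 r).const_add 1)
  have hrpow : ∀ (q : ℝ) (r : ℝ),
      HasDerivAt (fun x : ℝ => (1 + x ^ 2) ^ q) (q * (1 + r ^ 2) ^ (q - 1) * (2 * r)) r := by
    intro q r
    exact (Real.hasDerivAt_rpow_const (Or.inl (hXpos r).ne')).comp r (hbase r)
  have huf : u = fun r : ℝ => c * (1 + r ^ 2) ^ e := funext fun r => hu r
  have hu' : ∀ r : ℝ, HasDerivAt u (K * (r * (1 + r ^ 2) ^ (e - 1))) r := by
    intro r
    rw [huf]
    have h := (hrpow e r).const_mul c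
    refine h.congr_deriv ?_
    ring
  have hUrf : Ur = fun r : ℝ => K * (r * (1 + r ^ 2) ^ (e - 1)) := by
    funext r
    rw [hUr]
    exact (hu' r).deriv
  have hUrEq : ∀ r : ℝ, Ur r = K * (r * (1 + r ^ 2) ^ (e - 1)) := fun r => by rw [hUrf]
  set W : ℝ → ℝ := fun r =>
    K * ((1 + r ^ 2) ^ (e - 1) + (e - 1) * 2 * (r ^ 2 * (1 + r ^ 2) ^ (e - 2))) with hWdef
  have hUr' : ∀ r : ℝ, HasDerivAt Ur (W r) r := by
    intro r
    rw [hUrf]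
    have h1 : HasDerivAt (fun x : ℝ => x * (1 + x ^ 2) ^ (e - 1))
        (1 * (1 + r ^ 2) ^ (e - 1) + r * ((e - 1) * (1 + r ^ 2) ^ (e - 1 - 1) * (2 * r))) r :=
      (hasDerivAt_id r).mul (hrpow (e - 1) r)
    have h2 := h1.const_mul K
    refine h2.congr_deriv ?_
    rw [hWdef, show e - 1 - 1 = e - 2 by ring]
    ring
  set Wd : ℝ → ℝ := fun r =>
    K * ((e - 1) * (1 + r ^ 2) ^ (e - 2) * (2 * r) +
      (e - 1) * 2 * ((2 * r) * (1 + r ^ 2) ^ (e - 2) +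
        r ^ 2 * ((e - 2) * (1 + r ^ 2) ^ (e - 3) * (2 * r)))) with hWddef
  have hW' : ∀ r : ℝ, HasDerivAt W (Wd r) r := by
    intro r
    have h1 := hrpow (e - 1) r
    have h2 : HasDerivAt (fun x : ℝ => x ^ 2 * (1 + x ^ 2) ^ (e - 2))
        ((2 : ℕ) * r ^ 1 * (1 + r ^ 2) ^ (e - 2) +
          r ^ 2 * ((e - 2) * (1 + r ^ 2) ^ (e - 2 - 1) * (2 * r))) r :=
      (hasDerivAt_pow 2 r).mul (hrpow (e - 2) r)
    have h3 := (h1.add (h2.const_mul ((e - 1) * 2))).const_mul K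
    refine h3.congr_deriv ?_
    rw [hWddef, show e - 2 - 1 = e - 3 by ring, show e - 1 - 1 = e - 2 by ring]
    push_cast
    ring
  have hψdiff : Differentiable ℝ ψ := hψ.differentiable (by norm_num)
  have hφf : φ = fun r => Ur r * ψ r := funext hφ
  have hφ' : ∀ r : ℝ, HasDerivAt φ (W r * ψ r + Ur r * deriv ψ r) r := by
    intro r
    rw [hφf]
    exact (hUr' r).mul (hψdiff r).hasDerivAt
  have hdφ : ∀ r, deriv φ r = W r * ψ r + Ur r * deriv ψ r := fun r => (hφ' r).deriv
  set G : ℝ → ℝ := fun r => Ur r * W r * ψ r ^ 2 * r ^ (A - 1) with hGdef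
  set Gd : ℝ → ℝ := fun r =>
    ((W r * W r + Ur r * Wd r) * ψ r ^ 2 + Ur r * W r * (2 * ψ r * deriv ψ r)) * r ^ (A - 1) +
      Ur r * W r * ψ r ^ 2 * ((A - 1) * r ^ (A - 2)) with hGddef
  have hψ2 : ∀ r : ℝ, HasDerivAt (fun x => ψ x ^ 2) (2 * ψ r * deriv ψ r) r := by
    intro r
    have := (hψdiff r).hasDerivAt.pow 2
    exact this.congr_deriv (by norm_num)
  have hG' : ∀ r ∈ Set.Ioo (0:ℝ) (2 * R), HasDerivAt G (Gd r) r := by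
    intro r hr
    have hpow : HasDerivAt (fun x : ℝ => x ^ (A - 1)) ((A - 1) * r ^ (A - 2)) r := by
      have h := Real.hasDerivAt_rpow_const (x := r) (p := A - 1) (Or.inl hr.1.ne')
      simpa [show A - 1 - 1 = A - 2 by ring] using h
    have h := (((hUr' r).mul (hW' r)).mul (hψ2 r)).mul hpow
    exact h
  have hGtend2R : Filter.Tendsto G (nhdsWithin (2 * R) (Set.Iio (2 * R))) (nhds 0) := by
    have hc : ContinuousAt G (2 * R) := by
      exact (((hUr' (2 * R)).continuousAt.mul (hW' (2 * R)).continuousAt).mul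
        ((hψ2 (2 * R)).continuousAt)).mul
        (Real.continuousAt_rpow_const _ _ (Or.inl h2R.ne'))
    have h : Filter.Tendsto G (nhdsWithin (2 * R) (Set.Iio (2 * R))) (nhds (G (2 * R))) :=
      (hc.continuousWithinAt)
    have hG0 : G (2 * R) = 0 := by rw [hGdef]; simp [hψR]
    rwa [hG0] at h
  have hGtend0 : Filter.Tendsto G (nhdsWithin 0 (Set.Ioi (0:ℝ))) (nhds 0) := by
    have hc : ContinuousAt G 0 := by
      exact (((hUr' 0).continuousAt.mul (hW' 0).continuousAt).mul
        ((hψ2 0).continuousAt)).mul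
        (Real.continuousAt_rpow_const _ _ (Or.inr (by linarith)))
    have h : Filter.Tendsto G (nhdsWithin 0 (Set.Ioi (0:ℝ))) (nhds (G 0)) :=
      (hc.continuousWithinAt)
    have hG0 : G 0 = 0 := by rw [hGdef]; simp [hUrf]
    rwa [hG0] at h
  -- the key pointwise identity
  have hMpos : (0:ℝ) < A * (A - 2) := by nlinarith
  have hp1 : p - 1 = 4 / (A - 2) := by rw [hp]; field_simp; ring
  have hcp : c ^ (p - 1) = A * (A - 2) := by
    rw [hcdef, ← Real.rpow_mul hMpos.le, hp1,
      show (A - 2) / 4 * (4 / (A - 2)) = 1 by field_simp, Real.rpow_one]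
  have hkey : ∀ r ∈ Set.Ioo (0:ℝ) (2 * R),
      ((deriv φ r) ^ 2 - p * (u r) ^ (p - 1) * (φ r) ^ 2 +
          (A - 1) * (φ r) ^ 2 / r ^ 2) * r ^ (A - 1) =
        (deriv ψ r) ^ 2 * (Ur r) ^ 2 * r ^ (A - 1) + Gd r := by
    intro r hr
    have hrpos : (0:ℝ) < r := hr.1
    have hXne : (1 + r ^ 2) ≠ 0 := (hXpos r).ne'
    have hup : u r ^ (p - 1) = A * (A - 2) * ((1 + r ^ 2) ^ 2)⁻¹ := by
      rw [hu r, Real.mul_rpow (Real.rpow_nonneg hMpos.le _) (Real.rpow_nonneg (hXpos r).le _),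
        hcp, ← Real.rpow_mul (hXpos r).le,
        show e * (p - 1) = -2 by rw [hp1, hedef]; field_simp; ring,
        show (-2 : ℝ) = -((2:ℕ):ℝ) by norm_num, Real.rpow_neg (hXpos r).le,
        Real.rpow_natCast]
    have hP1 : (1 + r ^ 2) ^ (e - 1) = (1 + r ^ 2) ^ (e - 3) * (1 + r ^ 2) ^ 2 := by
      rw [show e - 1 = (e - 3) + ((2:ℕ):ℝ) by push_cast; ring, Real.rpow_add (hXpos r),
        Real.rpow_natCast]
    have hP2 : (1 + r ^ 2) ^ (e - 2) = (1 + r ^ 2) ^ (e - 3) * (1 + r ^ 2) := by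
      rw [show e - 2 = (e - 3) + 1 by ring, Real.rpow_add (hXpos r), Real.rpow_one]
    have hrA : r ^ (A - 1) = r ^ (A - 2) * r := by
      rw [show A - 1 = (A - 2) + 1 by ring, Real.rpow_add hrpos, Real.rpow_one]
    rw [hdφ r, hφ r, hup]
    simp only [hGddef, hWdef, hWddef, hUrEq, hP1, hP2, hrA]
    generalize (1 + r ^ 2) ^ (e - 3) = T
    generalize r ^ (A - 2) = S
    rw [hp, hedef]
    field_simp
    ring
  have hFint : IntegrableOn (fun r => ((deriv φ r) ^ 2 - p * (u r) ^ (p - 1) * (φ r) ^ 2 +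
      (A - 1) * (φ r) ^ 2 / r ^ 2) * r ^ (A - 1)) (Set.Ioo 0 (2 * R)) := by
    have h : IntegrableOn (fun r => (deriv φ r ^ 2 * r ^ (A - 1)
        - p * (u r ^ (p - 1) * φ r ^ 2 * r ^ (A - 1)))
        + (A - 1) * (φ r ^ 2 / r ^ 2 * r ^ (A - 1))) (Set.Ioo 0 (2 * R)) :=
      (hint1.sub (hint2.const_mul p)).add (hint3.const_mul (A - 1))
    refine h.congr_fun (fun r _ => ?_) measurableSet_Ioo
    ring
  have hGdint : IntegrableOn Gd (Set.Ioo 0 (2 * R)) := by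
    have h : IntegrableOn (fun r => ((deriv φ r) ^ 2 - p * (u r) ^ (p - 1) * (φ r) ^ 2 +
        (A - 1) * (φ r) ^ 2 / r ^ 2) * r ^ (A - 1)
        - (deriv ψ r) ^ 2 * (Ur r) ^ 2 * r ^ (A - 1)) (Set.Ioo 0 (2 * R)) :=
      hFint.sub hint4
    refine h.congr_fun (fun r hr => ?_) measurableSet_Ioo
    have h2 := hkey r hr
    linarith
  have hGdInt' : IntervalIntegrable Gd volume 0 (2 * R) := by
    rw [intervalIntegrable_iff_integrableOn_Ioo_of_le h2R.le]
    exact hGdint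
  have hFTC : ∫ r in (0:ℝ)..(2 * R), Gd r = 0 - 0 :=
    intervalIntegral.integral_eq_sub_of_hasDerivAt_of_tendsto h2R hG' hGdInt' hGtend0 hGtend2R
  have hGdzero : ∫ r in Set.Ioo (0:ℝ) (2 * R), Gd r = 0 := by
    have h1 : ∫ r in (0:ℝ)..(2 * R), Gd r = ∫ r in Set.Ioo (0:ℝ) (2 * R), Gd r := by
      rw [intervalIntegral.integral_of_le h2R.le, MeasureTheory.integral_Ioc_eq_integral_Ioo]
    rw [← h1, hFTC]; ring
  constructor
  · have h2 : (∫ r in Set.Ioo (0:ℝ) (2 * R),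
        ((deriv φ r) ^ 2 - p * (u r) ^ (p - 1) * (φ r) ^ 2 +
          (A - 1) * (φ r) ^ 2 / r ^ 2) * r ^ (A - 1)) =
        ∫ r in Set.Ioo (0:ℝ) (2 * R),
          ((deriv ψ r) ^ 2 * (Ur r) ^ 2 * r ^ (A - 1) + Gd r) :=
      setIntegral_congr_fun measurableSet_Ioo hkey
    rw [h2, integral_add hint4 hGdint, hGdzero, add_zero]
  · refine setIntegral_nonneg measurableSet_Ioo (fun r hr => ?_)
    exact mul_nonneg (mul_nonneg (sq_nonneg _) (sq_nonneg _)) (Real.rpow_nonneg hr.1.le _)
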